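/- Let G act linearly and isometrically on a Hilbert space M, X = t₀ + σε with t₀ a fixed point of G, E(ε) = 0, E‖ε‖² = 1. Then for any unit vector v and λ > 0, the quotient variance satisfies F(t₀ + λv) = E‖X‖² − ‖t₀‖² − 2λ E(sup_g ⟨v, g·(X − t₀)⟩) + λ², and if a Fréchet mean of [X] exists, its quotient distance to [t₀] equals σ · sup_{‖v‖=1} E(sup_{g∈G} ⟨v, g·ε⟩). -/

import Mathlib

open MeasureTheory


lemma aux_iInf_const_sub {ι : Sort*} [Nonempty ι] (g : ι → ℝ)
    (hg : BddAbove (Set.range g)) (C c : ℝ) (hc : 0 ≤ c) :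
    (⨅ i, (C - c * g i)) = C - c * ⨆ i, g i := by
  have haf : Antitone (fun x : ℝ => C - c * x) := by
    intro x y hxy
    simp only
    nlinarith
  exact (haf.map_ciSup_of_continuousAt (by fun_prop) hg).symm

/-- When the template `t₀` is a fixed point: expansion of the quotient
variance `F(t₀ + λv)` for unit `v` and `λ > 0`, and the consistency bias
equals `σ · sup_{‖v‖=1} E(sup_g ⟨v, g•ε⟩)` for any Fréchet mean `[m⋆]`. -/
theorem stmt16 {M G Ω : Type*} [NormedAddCommGroup M] [InnerProductSpace ℝ M]
    [CompleteSpace M] [Nontrivial M] [Group G] [MulAction G M] [MeasurableSpace Ω]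
    (μ : Measure Ω) [IsProbabilityMeasure μ]
    (hlin : ∀ g : G, IsLinearMap ℝ fun x : M => g • x)
    (hiso : ∀ (g : G) (x : M), ‖g • x‖ = ‖x‖)
    (ε : Ω → M) (t₀ : M) (σ : ℝ) (hσ : 0 < σ)
    (hεint : Integrable ε μ) (hεmean : ∫ ω, ε ω ∂μ = 0)
    (hε2 : (∫ ω, ‖ε ω‖ ^ 2 ∂μ) = 1)
    (hε2int : Integrable (fun ω => ‖ε ω‖ ^ 2) μ)
    (X : Ω → M) (hX : ∀ ω, X ω = t₀ + σ • ε ω)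
    (hfix : ∀ g : G, g • t₀ = t₀)
    (hbdd : ∀ (ω) (v : M), BddAbove
      (Set.range fun g : G => (inner ℝ v (g • ε ω) : ℝ)))
    (hsup : ∀ v : M, Integrable
      (fun ω => ⨆ g : G, (inner ℝ v (g • ε ω) : ℝ)) μ) :
    (∀ (v : M), ‖v‖ = 1 → ∀ lam : ℝ, 0 < lam →
      (∫ ω, ⨅ g : G, ‖g • X ω - (t₀ + lam • v)‖ ^ 2 ∂μ)
        = (∫ ω, ‖X ω‖ ^ 2 ∂μ) - ‖t₀‖ ^ 2
          - 2 * lam * (∫ ω, ⨆ g : G, (inner ℝ v (g • (X ω - t₀)) : ℝ) ∂μ)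
          + lam ^ 2) ∧
    (∀ m₀ : M, (∀ m : M, (∫ ω, ⨅ g : G, ‖g • X ω - m₀‖ ^ 2 ∂μ)
        ≤ ∫ ω, ⨅ g : G, ‖g • X ω - m‖ ^ 2 ∂μ) →
      (⨅ g : G, ‖g • m₀ - t₀‖)
        = σ * ⨆ v : Metric.sphere (0 : M) 1,
            ∫ ω, ⨆ g : G, (inner ℝ (v : M) (g • ε ω) : ℝ) ∂μ) := by
  have hGne : Nonempty G := ⟨1⟩
  -- the function H
  set H : M → ℝ := fun w => ∫ ω, ⨆ g : G, (inner ℝ w (g • ε ω) : ℝ) ∂μ with hHdef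
  have hsup_smul : ∀ (w : M) (c : ℝ), 0 ≤ c → ∀ ω : Ω,
      (⨆ g : G, (inner ℝ (c • w) (g • ε ω) : ℝ)) = c * ⨆ g : G, (inner ℝ w (g • ε ω) : ℝ) := by
    intro w c hc ω
    rw [Real.mul_iSup_of_nonneg hc]
    congr 1; funext g; rw [real_inner_smul_left]
  have hHsmul : ∀ (w : M) (c : ℝ), 0 ≤ c → H (c • w) = c * H w := by
    intro w c hc
    calc H (c • w) = ∫ ω, c * ⨆ g : G, (inner ℝ w (g • ε ω) : ℝ) ∂μ := by
          simp only [hHdef]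
          congr 1; funext ω; exact hsup_smul w c hc ω
      _ = c * H w := integral_const_mul c _
  have hHnonneg : ∀ w : M, 0 ≤ H w := by
    intro w
    have h0 : (∫ ω, (inner ℝ w (ε ω) : ℝ) ∂μ) = 0 := by
      rw [integral_inner hεint, hεmean, inner_zero_right]
    rw [hHdef, ← h0]
    apply integral_mono (hεint.const_inner w) (hsup w)
    intro ω
    simpa using le_ciSup (hbdd ω w) (1 : G)
  have hH0 : H 0 = 0 := by
    have := hHsmul 0 0 le_rfl
    simpa using this
  -- pointwise expansion
  have hgX : ∀ (g : G) (ω : Ω), g • X ω = t₀ + σ • (g • ε ω) := by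
    intro g ω
    rw [hX, (hlin g).map_add, (hlin g).map_smul, hfix]
  have keypt : ∀ (m : M) (ω : Ω),
      (⨅ g : G, ‖g • X ω - m‖ ^ 2)
        = ‖m - t₀‖ ^ 2 + σ ^ 2 * ‖ε ω‖ ^ 2
          - 2 * σ * ⨆ g : G, (inner ℝ (m - t₀) (g • ε ω) : ℝ) := by
    intro m ω
    have hnorm : ∀ g : G, ‖g • X ω - m‖ ^ 2
        = (‖m - t₀‖ ^ 2 + σ ^ 2 * ‖ε ω‖ ^ 2) - 2 * σ * (inner ℝ (m - t₀) (g • ε ω) : ℝ) := by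
      intro g
      have h2 : g • X ω - m = (t₀ - m) + σ • (g • ε ω) := by rw [hgX]; abel
      have h1 : (inner ℝ (t₀ - m) (σ • (g • ε ω)) : ℝ)
          = - (σ * (inner ℝ (m - t₀) (g • ε ω) : ℝ)) := by
        rw [real_inner_smul_right, ← neg_sub m t₀, inner_neg_left]; ring
      rw [h2, norm_add_sq_real, h1, norm_smul, Real.norm_eq_abs, abs_of_pos hσ,
        hiso, norm_sub_rev]
      ring
    simp_rw [hnorm]
    exact aux_iInf_const_sub _ (hbdd ω (m - t₀)) _ _ (by positivity)
  -- integrated expansion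
  have key : ∀ m : M, (∫ ω, ⨅ g : G, ‖g • X ω - m‖ ^ 2 ∂μ)
      = ‖m - t₀‖ ^ 2 + σ ^ 2 - 2 * σ * H (m - t₀) := by
    intro m
    have h1 : (∫ ω, ⨅ g : G, ‖g • X ω - m‖ ^ 2 ∂μ)
        = ∫ ω, ((‖m - t₀‖ ^ 2 + σ ^ 2 * ‖ε ω‖ ^ 2)
            - 2 * σ * ⨆ g : G, (inner ℝ (m - t₀) (g • ε ω) : ℝ)) ∂μ := by
      congr 1; funext ω; exact keypt m ω
    have hint1 : Integrable (fun ω => ‖m - t₀‖ ^ 2 + σ ^ 2 * ‖ε ω‖ ^ 2) μ :=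
      (integrable_const _).add (hε2int.const_mul _)
    have hint2 : Integrable (fun ω => 2 * σ * ⨆ g : G, (inner ℝ (m - t₀) (g • ε ω) : ℝ)) μ :=
      (hsup (m - t₀)).const_mul _
    rw [h1, integral_sub hint1 hint2,
      integral_add (integrable_const _) (hε2int.const_mul _),
      integral_const, integral_const_mul, integral_const_mul, hε2]
    simp [hHdef]
  -- second moment of X
  have hX2 : (∫ ω, ‖X ω‖ ^ 2 ∂μ) = ‖t₀‖ ^ 2 + σ ^ 2 := by
    have hpt : ∀ ω : Ω, ‖X ω‖ ^ 2
        = (‖t₀‖ ^ 2 + σ ^ 2 * ‖ε ω‖ ^ 2) + 2 * σ * (inner ℝ t₀ (ε ω) : ℝ) := by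
      intro ω
      rw [hX, norm_add_sq_real, norm_smul, real_inner_smul_right, Real.norm_eq_abs,
        abs_of_pos hσ]
      ring
    have h1 : (∫ ω, ‖X ω‖ ^ 2 ∂μ)
        = ∫ ω, ((‖t₀‖ ^ 2 + σ ^ 2 * ‖ε ω‖ ^ 2) + 2 * σ * (inner ℝ t₀ (ε ω) : ℝ)) ∂μ := by
      congr 1; funext ω; exact hpt ω
    have h0 : (∫ ω, (inner ℝ t₀ (ε ω) : ℝ) ∂μ) = 0 := by
      rw [integral_inner hεint, hεmean, inner_zero_right]
    have hintA : Integrable (fun ω => ‖t₀‖ ^ 2 + σ ^ 2 * ‖ε ω‖ ^ 2) μ :=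
      (integrable_const _).add (hε2int.const_mul _)
    have hintB : Integrable (fun ω => 2 * σ * (inner ℝ t₀ (ε ω) : ℝ)) μ :=
      (hεint.const_inner t₀).const_mul _
    rw [h1, integral_add hintA hintB,
      integral_add (integrable_const _) (hε2int.const_mul _),
      integral_const, integral_const_mul, integral_const_mul, hε2, h0]
    simp
  constructor
  · -- Part 1
    intro v hv lam hlam
    have hm : (t₀ + lam • v) - t₀ = lam • v := add_sub_cancel_left _ _
    have h2 : ‖lam • v‖ ^ 2 = lam ^ 2 := by
      rw [norm_smul, Real.norm_eq_abs, hv, mul_one, sq_abs]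
    have h3 : H (lam • v) = lam * H v := hHsmul v lam hlam.le
    have h4 : (∫ ω, ⨆ g : G, (inner ℝ v (g • (X ω - t₀)) : ℝ) ∂μ) = σ * H v := by
      have hptv : ∀ ω : Ω, (⨆ g : G, (inner ℝ v (g • (X ω - t₀)) : ℝ))
          = σ * ⨆ g : G, (inner ℝ v (g • ε ω) : ℝ) := by
        intro ω
        have hXt : X ω - t₀ = σ • ε ω := by rw [hX]; abel
        rw [Real.mul_iSup_of_nonneg hσ.le]
        congr 1; funext g
        rw [hXt, (hlin g).map_smul, real_inner_smul_right]
      calc (∫ ω, ⨆ g : G, (inner ℝ v (g • (X ω - t₀)) : ℝ) ∂μ)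
          = ∫ ω, σ * ⨆ g : G, (inner ℝ v (g • ε ω) : ℝ) ∂μ := by
            congr 1; funext ω; exact hptv ω
        _ = σ * H v := integral_const_mul σ _
    rw [key (t₀ + lam • v), hX2, hm, h2, h3, h4]
    ring
  · -- Part 2
    intro m₀ hmin
    have hmin' : ∀ m : M, ‖m₀ - t₀‖ ^ 2 - 2 * σ * H (m₀ - t₀)
        ≤ ‖m - t₀‖ ^ 2 - 2 * σ * H (m - t₀) := by
      intro m
      have h := hmin m
      rw [key, key] at h
      linarith
    have hLHS : (⨅ g : G, ‖g • m₀ - t₀‖) = ‖m₀ - t₀‖ := by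
      have hc : ∀ g : G, ‖g • m₀ - t₀‖ = ‖m₀ - t₀‖ := by
        intro g
        conv_lhs => rw [← hfix g]
        rw [← (hlin g).map_sub, hiso]
      simp_rw [hc]
      exact ciInf_const
    haveI hsne : Nonempty (Metric.sphere (0 : M) 1) :=
      (NormedSpace.sphere_nonempty.mpr zero_le_one).to_subtype
    rw [hLHS]
    show ‖m₀ - t₀‖ = σ * ⨆ v : Metric.sphere (0 : M) 1, H ↑v
    rcases eq_or_ne m₀ t₀ with h0 | h0
    · have hall : ∀ v : Metric.sphere (0 : M) 1, H (↑v) = 0 := by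
        rintro ⟨v, hv⟩
        have hv' : ‖v‖ = 1 := mem_sphere_zero_iff_norm.mp hv
        refine le_antisymm ?_ (hHnonneg v)
        by_contra hlt
        push_neg at hlt
        have hcpos : 0 < σ * H v := mul_pos hσ hlt
        have h := hmin' (t₀ + (σ * H v) • v)
        rw [add_sub_cancel_left, h0, sub_self, norm_zero, hH0] at h
        have e1 : ‖(σ * H v) • v‖ ^ 2 = (σ * H v) ^ 2 := by
          rw [norm_smul, Real.norm_eq_abs, hv', mul_one, sq_abs]
        have e2 : H ((σ * H v) • v) = (σ * H v) * H v := hHsmul v _ hcpos.le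
        rw [e1, e2] at h
        nlinarith
      rw [h0, sub_self, norm_zero]
      have hzero : (⨆ v : Metric.sphere (0 : M) 1, H ↑v) = 0 := by
        simp only [hall]
        exact ciSup_const
      rw [hzero, mul_zero]
    · set lam0 := ‖m₀ - t₀‖ with hlam0
      have hlam0pos : 0 < lam0 := by
        rw [hlam0, norm_pos_iff, sub_ne_zero]; exact h0
      set v0 : M := lam0⁻¹ • (m₀ - t₀) with hv0def
      have hv0 : ‖v0‖ = 1 := by
        rw [hv0def, norm_smul, Real.norm_eq_abs, abs_of_pos (inv_pos.mpr hlam0pos),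
          ← hlam0, inv_mul_cancel₀ hlam0pos.ne']
      have hdecomp : m₀ - t₀ = lam0 • v0 := by
        rw [hv0def, smul_smul, mul_inv_cancel₀ hlam0pos.ne', one_smul]
      have hkey0 : H (m₀ - t₀) = lam0 * H v0 := by
        rw [hdecomp, hHsmul _ _ hlam0pos.le]
      have hile : ∀ v : M, ‖v‖ = 1 → H v ≤ H v0 := by
        intro v hv
        have h := hmin' (t₀ + lam0 • v)
        rw [add_sub_cancel_left, hkey0, hHsmul v lam0 hlam0pos.le] at h
        have e1 : ‖lam0 • v‖ ^ 2 = lam0 ^ 2 := by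
          rw [norm_smul, Real.norm_eq_abs, hv, mul_one, sq_abs]
        rw [e1] at h
        have h2 : 2 * σ * (lam0 * H v) ≤ 2 * σ * (lam0 * H v0) := by linarith
        have h3 := le_of_mul_le_mul_left h2 (by positivity : (0:ℝ) < 2 * σ)
        exact le_of_mul_le_mul_left h3 hlam0pos
      have hii : lam0 = σ * H v0 := by
        have hcnn : 0 ≤ σ * H v0 := mul_nonneg hσ.le (hHnonneg v0)
        have h := hmin' (t₀ + (σ * H v0) • v0)
        rw [add_sub_cancel_left, hkey0] at h
        have e1 : ‖(σ * H v0) • v0‖ ^ 2 = (σ * H v0) ^ 2 := by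
          rw [norm_smul, Real.norm_eq_abs, hv0, mul_one, sq_abs]
        have e2 : H ((σ * H v0) • v0) = (σ * H v0) * H v0 := hHsmul v0 _ hcnn
        rw [e1, e2] at h
        nlinarith
      have hbddS : BddAbove (Set.range fun v : Metric.sphere (0 : M) 1 => H ↑v) := by
        refine ⟨H v0, ?_⟩
        rintro x ⟨v, rfl⟩
        exact hile ↑v (mem_sphere_zero_iff_norm.mp v.2)
      have hsup_eq : (⨆ v : Metric.sphere (0 : M) 1, H ↑v) = H v0 := by
        apply le_antisymm
        · exact ciSup_le fun v => hile ↑v (mem_sphere_zero_iff_norm.mp v.2)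
        · exact le_ciSup hbddS ⟨v0, mem_sphere_zero_iff_norm.mpr hv0⟩
      rw [hsup_eq]
      exact hii
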